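/- Let 𝕟 = (n_1, …, n_d) be an index and 𝕦 = (u_1, …, u_d) ∈ (K̄[t])^d with ‖u_i‖_∞ < q^{n_i q/(q−1)} for each i. Then the series L_{𝕦,𝕟}(t) ∈ K̄_∞[[t]] satisfies the Frobenius difference equation L_{𝕦,𝕟}^{(−1)} = (u_d^{(−1)}/(t−θ)^{n_1+⋯+n_{d−1}}) · L_{(u_1,…,u_{d−1}), (n_1,…,n_{d−1})} + L_{𝕦,𝕟}/(t−θ)^{n_1+⋯+n_d}, an identity in K̄_∞[[t]] (the element t−θ is invertible in K̄_∞[[t]]); here for d = 1 the first summand is interpreted as u_1^{(−1)}, i.e. L_{∅,∅} := 1. -/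

import Mathlib

/-!
Common setup: the function field `K = 𝔽_q(θ)`, its completion
`K_∞ = 𝔽_q((1/θ))` at the infinite place (realized as Laurent series in the
variable `X = θ⁻¹`), a fixed algebraic closure `K̄_∞` of `K_∞`, the algebraic
closure `K̄` of `K` inside `K̄_∞`, the `∞`-adic absolute value, multizeta
values, Carlitz (multiple) polylogarithms and the Carlitz period `π̃`.
-/

open Filter
open scoped Classical

noncomputable section

namespace MZV

/-- Unconditional (unordered) convergence of the sum of the family `f` to `L`,
with respect to an absolute-value function `v`. -/
def HasSumAbs {M ι : Type*} [AddCommGroup M] (v : M → ℝ) (f : ι → M) (L : M) : Prop :=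
  ∀ ε : ℝ, 0 < ε → ∃ s : Finset ι, ∀ t : Finset ι, s ⊆ t → v (∑ i ∈ t, f i - L) < ε

/-- Convergence of a sequence to `L` with respect to an absolute-value
function `v`. -/
def TendstoAbs {M : Type*} [AddCommGroup M] (v : M → ℝ) (f : ℕ → M) (L : M) : Prop :=
  Tendsto (fun n => v (f n - L)) atTop (nhds 0)

/-- The index set of "consecutive segments" `(ℓ, k)`, `0 ≤ ℓ ≤ k ≤ d - 1`
(in the notation of the paper, `I_d = {(i,j) : 1 ≤ j < i ≤ d+1}` via
`(ℓ, k) = (j - 1, i - 2)`); it has `d(d+1)/2` elements. -/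
def Seg (d : ℕ) : Type := {p : ℕ × ℕ // p.1 ≤ p.2 ∧ p.2 < d}

/-- The segment `(x_ℓ, x_{ℓ+1}, …, x_k)` of a `d`-tuple `x`, for a segment
`s = (ℓ, k) ∈ Seg d`. -/
def segFam {γ : Type*} {d : ℕ} (x : Fin d → γ) (s : Seg d) :
    Fin (s.1.2 - s.1.1 + 1) → γ :=
  fun i => x ⟨s.1.1 + i.1, by have h1 := i.2; have h2 := s.2.1; have h3 := s.2.2; omega⟩

/-- Index type for the sums defining multiple polylogarithms: strictly
decreasing tuples `i_1 > i_2 > ⋯ > i_m ≥ 0` of natural numbers. -/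
def DecTuple (m : ℕ) : Type :=
  {i : Fin m → ℕ // ∀ a b : Fin m, a < b → i b < i a}

variable (Fq : Type) [Field Fq] [Fintype Fq]

/-- `q`, the cardinality of the constant field `𝔽_q`. -/
def q : ℕ := Fintype.card Fq

/-- `K_∞ = 𝔽_q((1/θ))`, realized as the field of Laurent series in the
variable `X = θ⁻¹`.  The field `K = 𝔽_q(θ) = 𝔽_q(θ⁻¹)` is its subfield
`RatFunc 𝔽_q` (rational functions in `X = θ⁻¹`). -/
abbrev Kinf := LaurentSeries Fq

/-- The element `θ ∈ K_∞` (the inverse of the Laurent-series variable). -/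
def theta : Kinf Fq := (HahnSeries.single (1 : ℤ) (1 : Fq))⁻¹

/-- The `∞`-adic absolute value on `K_∞`, normalized by `|θ|_∞ = q`. -/
def absK (f : Kinf Fq) : ℝ :=
  if f = 0 then 0 else (q Fq : ℝ) ^ (-(HahnSeries.order f))

/-- A fixed algebraic closure `K̄_∞` of `K_∞`. -/
abbrev Kbinf := AlgebraicClosure (Kinf Fq)

open scoped RatFunc in
instance : Algebra (RatFunc Fq) (Kbinf Fq) :=
  ((algebraMap (Kinf Fq) (Kbinf Fq)).comp (algebraMap (RatFunc Fq) (Kinf Fq))).toAlgebra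

/-- `K̄`, the algebraic closure of `K = 𝔽_q(θ)` inside `K̄_∞` (the elements of
`K̄_∞` algebraic, equivalently integral, over `K`). -/
def Kbar : Subalgebra (RatFunc Fq) (Kbinf Fq) := integralClosure (RatFunc Fq) (Kbinf Fq)

/-- `θ` viewed inside `K̄_∞`. -/
def thetaB : Kbinf Fq := algebraMap (Kinf Fq) (Kbinf Fq) (theta Fq)

/-- The `N`-th partial product of
`∏_{i=1}^∞ (1 − θ^{1−q^i})⁻¹ ∈ K_∞`; its limit `P` enters the Carlitz period
`π̃ = (−θ)^{q/(q−1)} · P`. -/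
def piTildePartial (N : ℕ) : Kinf Fq :=
  ∏ i ∈ Finset.range N, (1 - theta Fq ^ ((1 : ℤ) - (q Fq : ℤ) ^ (i + 1)))⁻¹

/-- Index type for multizeta sums: `m`-tuples of monic polynomials in
`𝔽_q[θ]` with strictly decreasing degrees, `deg a_1 > ⋯ > deg a_m ≥ 0`. -/
def MonicDec (m : ℕ) : Type :=
  {a : Fin m → Polynomial Fq //
    (∀ i, (a i).Monic) ∧ ∀ i j : Fin m, i < j → (a j).degree < (a i).degree}

/-- The term `1/(a_1(θ)^{n_1} ⋯ a_m(θ)^{n_m})` of the multizeta sum. -/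
def mzvTerm (m : ℕ) (nn : Fin m → ℕ) (a : MonicDec Fq m) : Kinf Fq :=
  (∏ i, Polynomial.aeval (theta Fq) (a.1 i) ^ nn i)⁻¹

/-- `z = ζ(n_1, …, n_m)`: the multizeta value, an unconditionally convergent
sum in `K_∞`. -/
def IsMZV (m : ℕ) (nn : Fin m → ℕ) (z : Kinf Fq) : Prop :=
  HasSumAbs (absK Fq) (mzvTerm Fq m nn) z

/-- `D_i = (θ − θ^q)(θ − θ^{q²}) ⋯ (θ − θ^{q^i}) ∈ K_∞`. -/
def Dfac (i : ℕ) : Kinf Fq :=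
  ∏ s ∈ Finset.range i, (theta Fq - theta Fq ^ (q Fq) ^ (s + 1))

/-- The term `z_1^{q^{i_1}} ⋯ z_m^{q^{i_m}} / (D_{i_1}^{n_1} ⋯ D_{i_m}^{n_m})`
of the Carlitz multiple polylogarithm (for points of `K_∞`). -/
def cmplTerm (m : ℕ) (nn : Fin m → ℕ) (z : Fin m → Kinf Fq) (ii : DecTuple m) : Kinf Fq :=
  ∏ j, (z j ^ (q Fq) ^ (ii.1 j) * ((Dfac Fq (ii.1 j)) ^ nn j)⁻¹)

/-- `L = Li_{n_1, …, n_m}(z_1, …, z_m)`, the value of the Carlitz multiple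
polylogarithm at a point of `K_∞^m` (an unconditionally convergent sum in
`K_∞`). -/
def IsCMPL (m : ℕ) (nn : Fin m → ℕ) (z : Fin m → Kinf Fq) (L : Kinf Fq) : Prop :=
  HasSumAbs (absK Fq) (cmplTerm Fq m nn z) L

/-- The value `u^{(i)}(c) = Σ_j (coeff j of u)^{q^i} c^j` of the `i`-fold twist
of a polynomial `u`. -/
def twistEval (u : Polynomial (Kbinf Fq)) (i : ℕ) (c : Kbinf Fq) : Kbinf Fq :=
  ∑ j ∈ Finset.range (u.natDegree + 1), u.coeff j ^ (q Fq) ^ i * c ^ j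

/-- `(c − θ^q)(c − θ^{q²}) ⋯ (c − θ^{q^i}) ∈ K̄_∞`. -/
def DfacC (c : Kbinf Fq) (i : ℕ) : Kbinf Fq :=
  ∏ s ∈ Finset.range i, (c - thetaB Fq ^ (q Fq) ^ (s + 1))

/-- The term (at `t = c`) of the series `L_{𝕦,𝕟}`:
`u_1^{(i_1)}(c) ⋯ u_m^{(i_m)}(c) / (((c−θ^q)⋯(c−θ^{q^{i_1}}))^{n_1} ⋯ ((c−θ^q)⋯(c−θ^{q^{i_m}}))^{n_m})`. -/
def LTermC (m : ℕ) (nn : Fin m → ℕ) (uu : Fin m → Polynomial (Kbinf Fq)) (c : Kbinf Fq)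
    (ii : DecTuple m) : Kbinf Fq :=
  ∏ j, (twistEval Fq (uu j) (ii.1 j) c * ((DfacC Fq c (ii.1 j)) ^ nn j)⁻¹)

end MZV

namespace MZV

variable (Fq : Type) [Field Fq] [Fintype Fq]

/-- The term (as a power series in `t` over `K̄_∞`) of the series `L_{𝕦,𝕟}(t)`:
`u_1^{(i_1)} ⋯ u_m^{(i_m)} / (((t−θ^q)⋯(t−θ^{q^{i_1}}))^{n_1} ⋯ ((t−θ^q)⋯(t−θ^{q^{i_m}}))^{n_m})`,
the denominators being invertible power series. -/
def LTermPS (m : ℕ) (nn : Fin m → ℕ) (uu : Fin m → Polynomial (Kbinf Fq))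
    (ii : DecTuple m) : PowerSeries (Kbinf Fq) :=
  ∏ j, ((PowerSeries.mk fun k => (uu j).coeff k ^ (q Fq) ^ (ii.1 j)) *
    ((∏ s ∈ Finset.range (ii.1 j),
      (PowerSeries.X - PowerSeries.C (R := Kbinf Fq) (thetaB Fq ^ (q Fq) ^ (s + 1)))) ^ nn j)⁻¹)

end MZV

/-! ### Auxiliary material for the proof of Statement 10 -/

namespace MZV

section HasSumAbsLemmas

variable {F : Type*} [Field F] {v : AbsoluteValue F ℝ} {ι κ : Type*}

theorem HasSumAbs.unique {f : ι → F} {L L' : F}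
    (h1 : HasSumAbs v f L) (h2 : HasSumAbs v f L') : L = L' := by
  by_contra hne
  have hv0 : 0 < v (L - L') := v.pos (sub_ne_zero.2 hne)
  obtain ⟨s1, hs1⟩ := h1 _ (half_pos hv0)
  obtain ⟨s2, hs2⟩ := h2 _ (half_pos hv0)
  have e1 := hs1 (s1 ∪ s2) Finset.subset_union_left
  have e2 := hs2 (s1 ∪ s2) Finset.subset_union_right
  have key : v (L - L') ≤ v (∑ i ∈ s1 ∪ s2, f i - L) + v (∑ i ∈ s1 ∪ s2, f i - L') := by
    have h3 : L - L' = -(∑ i ∈ s1 ∪ s2, f i - L) + (∑ i ∈ s1 ∪ s2, f i - L') := by ring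
    rw [h3]
    refine (v.add_le _ _).trans ?_
    rw [v.map_neg]
  linarith

theorem hasSumAbs_zero : HasSumAbs v (fun _ : ι => (0 : F)) 0 := by
  intro ε hε
  exact ⟨∅, fun t _ => by simpa using hε⟩

theorem HasSumAbs.add {f g : ι → F} {A B : F}
    (hf : HasSumAbs v f A) (hg : HasSumAbs v g B) :
    HasSumAbs v (fun i => f i + g i) (A + B) := by
  intro ε hε
  obtain ⟨s1, hs1⟩ := hf _ (half_pos hε)
  obtain ⟨s2, hs2⟩ := hg _ (half_pos hε)
  refine ⟨s1 ∪ s2, fun t ht => ?_⟩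
  have h1 := hs1 t ((Finset.subset_union_left).trans ht)
  have h2 := hs2 t ((Finset.subset_union_right).trans ht)
  have h3 : ∑ i ∈ t, (f i + g i) - (A + B) = (∑ i ∈ t, f i - A) + (∑ i ∈ t, g i - B) := by
    rw [Finset.sum_add_distrib]; ring
  rw [h3]
  calc v ((∑ i ∈ t, f i - A) + (∑ i ∈ t, g i - B))
      ≤ v (∑ i ∈ t, f i - A) + v (∑ i ∈ t, g i - B) := v.add_le _ _
    _ < ε / 2 + ε / 2 := add_lt_add h1 h2
    _ = ε := add_halves ε

theorem HasSumAbs.const_mul {f : ι → F} {A : F} (c : F)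
    (hf : HasSumAbs v f A) : HasSumAbs v (fun i => c * f i) (c * A) := by
  intro ε hε
  rcases eq_or_ne c 0 with rfl | hc
  · exact ⟨∅, fun t _ => by simpa using hε⟩
  · obtain ⟨s, hs⟩ := hf _ (div_pos hε (v.pos hc))
    refine ⟨s, fun t ht => ?_⟩
    have h1 := hs t ht
    have h3 : ∑ i ∈ t, c * f i - c * A = c * (∑ i ∈ t, f i - A) := by
      rw [← Finset.mul_sum]; ring
    rw [h3, v.map_mul]
    calc v c * v (∑ i ∈ t, f i - A) < v c * (ε / v c) :=
          mul_lt_mul_of_pos_left h1 (v.pos hc)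
      _ = ε := by rw [mul_comm, div_mul_cancel₀ _ (ne_of_gt (v.pos hc))]

theorem hasSumAbs_finsetSum {β : Type*} (s : Finset β) (f : β → ι → F) (S : β → F)
    (h : ∀ b ∈ s, HasSumAbs v (f b) (S b)) :
    HasSumAbs v (fun i => ∑ b ∈ s, f b i) (∑ b ∈ s, S b) := by
  classical
  induction s using Finset.induction_on with
  | empty => simpa using (hasSumAbs_zero (v := v) (ι := ι))
  | @insert a s ha ih =>
      simp only [Finset.sum_insert ha]
      exact (h a (Finset.mem_insert_self a s)).add
        (ih fun b hb => h b (Finset.mem_insert_of_mem hb))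

theorem hasSumAbs_equiv (e : κ ≃ ι) {f : ι → F} {A : F}
    (h : HasSumAbs v f A) : HasSumAbs v (fun j => f (e j)) A := by
  intro ε hε
  obtain ⟨s, hs⟩ := h ε hε
  refine ⟨s.map e.symm.toEmbedding, fun t ht => ?_⟩
  have h1 : ∑ j ∈ t, f (e j) = ∑ i ∈ t.map e.toEmbedding, f i := by
    rw [Finset.sum_map]; rfl
  rw [h1]
  apply hs
  intro i hi
  rw [Finset.mem_map]
  exact ⟨e.symm i, ht (Finset.mem_map.2 ⟨i, hi, rfl⟩), e.apply_symm_apply i⟩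

theorem hasSumAbs_sumElim {f : ι → F} {g : κ → F} {A B : F}
    (hf : HasSumAbs v f A) (hg : HasSumAbs v g B) :
    HasSumAbs v (Sum.elim f g) (A + B) := by
  intro ε hε
  obtain ⟨s1, hs1⟩ := hf _ (half_pos hε)
  obtain ⟨s2, hs2⟩ := hg _ (half_pos hε)
  refine ⟨s1.disjSum s2, fun t ht => ?_⟩
  have hsum : ∑ i ∈ t, Sum.elim f g i = ∑ a ∈ t.toLeft, f a + ∑ b ∈ t.toRight, g b := by
    conv_lhs => rw [← Finset.toLeft_disjSum_toRight (u := t)]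
    rw [Finset.sum_disjSum]
    simp
  have h1 := hs1 t.toLeft
    (fun a ha => Finset.mem_toLeft.2 (ht (Finset.inl_mem_disjSum.2 ha)))
  have h2 := hs2 t.toRight
    (fun b hb => Finset.mem_toRight.2 (ht (Finset.inr_mem_disjSum.2 hb)))
  have h3 : ∑ a ∈ t.toLeft, f a + ∑ b ∈ t.toRight, g b - (A + B)
      = (∑ a ∈ t.toLeft, f a - A) + (∑ b ∈ t.toRight, g b - B) := by ring
  rw [hsum, h3]
  calc v ((∑ a ∈ t.toLeft, f a - A) + (∑ b ∈ t.toRight, g b - B))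
      ≤ v (∑ a ∈ t.toLeft, f a - A) + v (∑ b ∈ t.toRight, g b - B) := v.add_le _ _
    _ < ε / 2 + ε / 2 := add_lt_add h1 h2
    _ = ε := add_halves ε

theorem field_core {m : ℕ} (A D : Fin m → F) (nn : Fin m → ℕ) (Z : F) :
    ∏ j, (A j * ((Z * D j) ^ nn j)⁻¹)
      = (∏ j, (A j * (D j ^ nn j)⁻¹)) * (Z ^ (∑ j, nn j))⁻¹ := by
  calc ∏ j, (A j * ((Z * D j) ^ nn j)⁻¹)
      = ∏ j, ((A j * (D j ^ nn j)⁻¹) * ((Z ^ nn j)⁻¹)) :=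
        Finset.prod_congr rfl (fun j _ => by rw [mul_pow, mul_inv]; ring)
    _ = (∏ j, (A j * (D j ^ nn j)⁻¹)) * ∏ j, (Z ^ nn j)⁻¹ := Finset.prod_mul_distrib
    _ = _ := by rw [Finset.prod_inv_distrib, Finset.prod_pow_eq_pow_sum]

end HasSumAbsLemmas

section CharAndRho

variable (Fq : Type) [Field Fq] [Fintype Fq]

theorem rho_hom_spec (ρ : Kbinf Fq → Kbinf Fq) (hρ : ∀ x, ρ x ^ q Fq = x) :
    ∃ ρh : Kbinf Fq →+* Kbinf Fq, (∀ x, ρh x = ρ x) ∧ ∀ x, ρh (x ^ q Fq) = x := by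
  have hQ0 : q Fq ≠ 0 := Fintype.card_ne_zero
  haveI : CharP Fq (ringChar Fq) := ringChar.charP Fq
  haveI hFp : Fact (ringChar Fq).Prime := ⟨CharP.char_is_prime Fq _⟩
  obtain ⟨m, _, hcard⟩ := FiniteField.card Fq (ringChar Fq)
  haveI : CharP (Kinf Fq) (ringChar Fq) :=
    charP_of_injective_ringHom (HahnSeries.C_injective (Γ := ℤ) (R := Fq)) _
  haveI : CharP (Kbinf Fq) (ringChar Fq) :=
    charP_of_injective_ringHom (algebraMap (Kinf Fq) (Kbinf Fq)).injective _
  have hq : q Fq = ringChar Fq ^ (m : ℕ) := by unfold q; exact hcard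
  have injQ : Function.Injective (fun x : Kbinf Fq => x ^ q Fq) := by
    intro x y hxy
    have hxy' : x ^ q Fq = y ^ q Fq := hxy
    have h1 : (x - y) ^ q Fq = 0 := by
      rw [hq] at hxy' ⊢
      rw [sub_pow_char_pow, hxy', sub_self]
    have h2 := (pow_eq_zero_iff hQ0).1 h1
    exact sub_eq_zero.1 h2
  have hone : ρ 1 = 1 := injQ (show ρ 1 ^ q Fq = 1 ^ q Fq by rw [hρ, one_pow])
  have hmul : ∀ x y, ρ (x * y) = ρ x * ρ y := fun x y =>
    injQ (show ρ (x * y) ^ q Fq = (ρ x * ρ y) ^ q Fq by rw [hρ, mul_pow, hρ, hρ])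
  have hzero : ρ 0 = 0 := injQ (show ρ 0 ^ q Fq = 0 ^ q Fq by rw [hρ, zero_pow hQ0])
  have hadd : ∀ x y, ρ (x + y) = ρ x + ρ y := fun x y => by
    refine injQ (show ρ (x + y) ^ q Fq = (ρ x + ρ y) ^ q Fq from ?_)
    rw [hρ, hq, add_pow_char_pow, ← hq, hρ, hρ]
  have hpow : ∀ x, ρ (x ^ q Fq) = x := fun x =>
    injQ (show ρ (x ^ q Fq) ^ q Fq = x ^ q Fq by rw [hρ])
  exact ⟨⟨⟨⟨ρ, hone⟩, hmul⟩, hzero, hadd⟩, fun x => rfl, hpow⟩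

set_option synthInstance.maxHeartbeats 1000000 in
theorem hasSumAbs_rho {ι : Type*} (v : AbsoluteValue (Kbinf Fq) ℝ)
    (ρh : Kbinf Fq →+* Kbinf Fq) (hρ' : ∀ x, ρh x ^ q Fq = x)
    {f : ι → Kbinf Fq} {L : Kbinf Fq} (h : HasSumAbs v f L) :
    HasSumAbs v (fun i => ρh (f i)) (ρh L) := by
  intro ε hε
  obtain ⟨s, hs⟩ := h (ε ^ q Fq) (pow_pos hε _)
  refine ⟨s, fun t ht => ?_⟩
  have key : ∑ i ∈ t, ρh (f i) - ρh L = ρh (∑ i ∈ t, f i - L) := by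
    rw [map_sub, map_sum]
  rw [key]
  have hv2 : v (ρh (∑ i ∈ t, f i - L)) ^ q Fq = v (∑ i ∈ t, f i - L) := by
    rw [← v.map_pow, hρ']
  have h3 : v (ρh (∑ i ∈ t, f i - L)) ^ q Fq < ε ^ q Fq := by
    rw [hv2]; exact hs t ht
  exact lt_of_pow_lt_pow_left₀ _ hε.le h3

end CharAndRho

section Tuples

/-- Prepend one step: `(i_1, …, i_d) ↦ (i_1 + 1, …, i_d + 1, 0)`. -/
def pushT {d : ℕ} (ii' : DecTuple d) : DecTuple (d + 1) :=
  ⟨fun j => if h : (j : ℕ) < d then ii'.1 ⟨j, h⟩ + 1 else 0, by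
    intro a b hab
    show (if h : (b : ℕ) < d then ii'.1 ⟨b, h⟩ + 1 else 0)
      < (if h : (a : ℕ) < d then ii'.1 ⟨a, h⟩ + 1 else 0)
    have hab' : (a : ℕ) < (b : ℕ) := hab
    by_cases hb : (b : ℕ) < d
    · have ha : (a : ℕ) < d := hab'.trans hb
      simp only [dif_pos ha, dif_pos hb]
      have h1 := ii'.2 ⟨a, ha⟩ ⟨b, hb⟩ (Fin.mk_lt_mk.mpr hab')
      omega
    · have hb2 : (b : ℕ) < d + 1 := b.isLt
      have ha : (a : ℕ) < d := by omega
      simp only [dif_pos ha, dif_neg hb]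
      omega⟩

/-- Shift all entries up by one. -/
def succT {m : ℕ} (ii : DecTuple m) : DecTuple m :=
  ⟨fun j => ii.1 j + 1, fun a b hab => by
    show ii.1 b + 1 < ii.1 a + 1
    have := ii.2 a b hab; omega⟩

/-- The splitting `DecTuple d ⊕ DecTuple (d+1) ≃ DecTuple (d+1)` according to
whether the last entry is `0`. -/
def splitEquiv (d : ℕ) : (DecTuple d ⊕ DecTuple (d + 1)) ≃ DecTuple (d + 1) where
  toFun := Sum.elim pushT succT
  invFun ii :=
    if h : ii.1 (Fin.last d) = 0 then
      Sum.inl ⟨fun j => ii.1 j.castSucc - 1, by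
        intro a b hab
        show ii.1 b.castSucc - 1 < ii.1 a.castSucc - 1
        have h1 := ii.2 a.castSucc b.castSucc (Fin.castSucc_lt_castSucc_iff.2 hab)
        have h2 := ii.2 b.castSucc (Fin.last d) (Fin.castSucc_lt_last b)
        omega⟩
    else
      Sum.inr ⟨fun j => ii.1 j - 1, by
        intro a b hab
        show ii.1 b - 1 < ii.1 a - 1
        have h1 := ii.2 a b hab
        have h2 : 1 ≤ ii.1 b := by
          rcases eq_or_lt_of_le (Fin.le_last b) with hb | hb
          · rw [hb]; omega
          · have := ii.2 b (Fin.last d) hb; omega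
        omega⟩
  left_inv := by
    rintro (ii' | ii)
    · simp only [Sum.elim_inl]
      have hc : (pushT ii').1 (Fin.last d) = 0 := by
        show (if h : ((Fin.last d : Fin (d + 1)) : ℕ) < d then ii'.1 ⟨_, h⟩ + 1 else 0) = 0
        rw [dif_neg (by simp)]
      refine (dif_pos hc).trans ?_
      congr 1
      apply Subtype.ext
      funext j
      show (if h : ((j.castSucc : Fin (d + 1)) : ℕ) < d then ii'.1 ⟨_, h⟩ + 1 else 0) - 1
        = ii'.1 j
      have hj : ((j.castSucc : Fin (d + 1)) : ℕ) < d := by simpa using j.isLt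
      rw [dif_pos hj]
      have hj2 : (⟨((j.castSucc : Fin (d + 1)) : ℕ), hj⟩ : Fin d) = j := Fin.ext (by simp)
      rw [hj2]
      omega
    · simp only [Sum.elim_inr]
      have hc : (succT ii).1 (Fin.last d) ≠ 0 := by simp [succT]
      refine (dif_neg hc).trans ?_
      exact congrArg Sum.inr (Subtype.ext (funext fun j => by
        show ii.1 j + 1 - 1 = ii.1 j
        omega))
  right_inv := by
    intro ii
    by_cases h : ii.1 (Fin.last d) = 0
    · show Sum.elim pushT succT (dite _ _ _) = ii
      rw [dif_pos h]
      change pushT _ = ii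
      apply Subtype.ext
      funext j
      show (if hj : (j : ℕ) < d then ii.1 (Fin.castSucc ⟨(j : ℕ), hj⟩) - 1 + 1 else 0)
        = ii.1 j
      by_cases hj : (j : ℕ) < d
      · rw [dif_pos hj]
        have hlt : Fin.castSucc (⟨(j : ℕ), hj⟩ : Fin d) < Fin.last d :=
          Fin.castSucc_lt_last _
        have h2 := ii.2 _ _ hlt
        rw [h] at h2
        have hcs : Fin.castSucc (⟨(j : ℕ), hj⟩ : Fin d) = j := Fin.ext (by simp)
        rw [hcs] at h2 ⊢
        omega
      · rw [dif_neg hj]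
        have hj2 : j = Fin.last d := by
          apply Fin.ext
          have := j.isLt
          simp only [Fin.val_last]
          omega
        rw [hj2, h]
    · show Sum.elim pushT succT (dite _ _ _) = ii
      rw [dif_neg h]
      change succT _ = ii
      apply Subtype.ext
      funext j
      show ii.1 j - 1 + 1 = ii.1 j
      have h2 : 1 ≤ ii.1 j := by
        rcases eq_or_lt_of_le (Fin.le_last j) with hb | hb
        · rw [hb]; omega
        · have := ii.2 j (Fin.last d) hb; omega
      omega

end Tuples

section PowerSeriesLemmas

variable (Fq : Type) [Field Fq] [Fintype Fq]

theorem thetaB_ne_zero : thetaB Fq ≠ 0 := by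
  have h1 : theta Fq ≠ 0 := inv_ne_zero (HahnSeries.single_ne_zero one_ne_zero)
  intro h
  have h' : algebraMap (Kinf Fq) (Kbinf Fq) (theta Fq) = 0 := h
  exact h1 ((map_eq_zero _).1 h')

/-- The denominator `(t − θ^q) ⋯ (t − θ^{q^i})` as a power series. -/
def Dden (i : ℕ) : PowerSeries (Kbinf Fq) :=
  ∏ s ∈ Finset.range i,
    (PowerSeries.X - PowerSeries.C (R := Kbinf Fq) (thetaB Fq ^ (q Fq) ^ (s + 1)))

theorem LTermPS_eq (m : ℕ) (nn : Fin m → ℕ) (uu : Fin m → Polynomial (Kbinf Fq))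
    (ii : DecTuple m) :
    LTermPS Fq m nn uu ii =
      ∏ j, ((PowerSeries.mk fun k => (uu j).coeff k ^ (q Fq) ^ (ii.1 j)) *
        ((Dden Fq (ii.1 j)) ^ nn j)⁻¹) := rfl

theorem Dden_cc (i : ℕ) : PowerSeries.constantCoeff (R := Kbinf Fq) (Dden Fq i) ≠ 0 := by
  rw [Dden, map_prod]
  refine Finset.prod_ne_zero_iff.2 fun s _ => ?_
  rw [map_sub, PowerSeries.constantCoeff_X, PowerSeries.constantCoeff_C, zero_sub]
  exact neg_ne_zero.2 (pow_ne_zero _ (thetaB_ne_zero Fq))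

theorem Z_cc : PowerSeries.constantCoeff (R := Kbinf Fq)
    (PowerSeries.X - PowerSeries.C (R := Kbinf Fq) (thetaB Fq)) ≠ 0 := by
  rw [map_sub, PowerSeries.constantCoeff_X, PowerSeries.constantCoeff_C, zero_sub]
  exact neg_ne_zero.2 (thetaB_ne_zero Fq)

theorem ofps_inv (φ : PowerSeries (Kbinf Fq))
    (h : PowerSeries.constantCoeff (R := Kbinf Fq) φ ≠ 0) :
    HahnSeries.ofPowerSeries ℤ (Kbinf Fq) φ⁻¹
      = ((HahnSeries.ofPowerSeries ℤ (Kbinf Fq)) φ)⁻¹ := by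
  have h1 : φ * φ⁻¹ = 1 := PowerSeries.mul_inv_cancel φ h
  have h2 : (HahnSeries.ofPowerSeries ℤ (Kbinf Fq)) φ
      * (HahnSeries.ofPowerSeries ℤ (Kbinf Fq)) φ⁻¹ = 1 := by
    rw [← map_mul, h1, map_one]
  exact (inv_eq_of_mul_eq_one_right h2).symm

theorem ps_map_mk (f : Kbinf Fq →+* Kbinf Fq) (g : ℕ → Kbinf Fq) :
    PowerSeries.map f (PowerSeries.mk g) = PowerSeries.mk fun k => f (g k) := by
  ext k
  simp [PowerSeries.coeff_map]

theorem ps_inv_one : ((1 : PowerSeries (Kbinf Fq)))⁻¹ = 1 := by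
  refine ((PowerSeries.eq_inv_iff_mul_eq_one ?_).2 (one_mul 1)).symm
  simp

theorem ps_map_inv (f : Kbinf Fq →+* Kbinf Fq) (φ : PowerSeries (Kbinf Fq))
    (h : PowerSeries.constantCoeff (R := Kbinf Fq) φ ≠ 0) :
    PowerSeries.map f φ⁻¹ = (PowerSeries.map f φ)⁻¹ := by
  have h2 : PowerSeries.constantCoeff (R := Kbinf Fq) (PowerSeries.map f φ) ≠ 0 := by
    have hcc : PowerSeries.constantCoeff (R := Kbinf Fq) (PowerSeries.map f φ)
        = f (PowerSeries.constantCoeff (R := Kbinf Fq) φ) := by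
      rw [← PowerSeries.coeff_zero_eq_constantCoeff_apply, PowerSeries.coeff_map,
        PowerSeries.coeff_zero_eq_constantCoeff_apply]
    rw [hcc]
    exact fun hh => h (f.injective (by rw [hh, map_zero]))
  rw [PowerSeries.eq_inv_iff_mul_eq_one h2, ← map_mul]
  have h3 : φ⁻¹ * φ = 1 := by rw [mul_comm]; exact PowerSeries.mul_inv_cancel φ h
  rw [h3, map_one]

theorem map_Dden (ρh : Kbinf Fq →+* Kbinf Fq) (hpow : ∀ x, ρh (x ^ q Fq) = x) (i : ℕ) :
    PowerSeries.map ρh (Dden Fq (i + 1))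
      = (PowerSeries.X - PowerSeries.C (R := Kbinf Fq) (thetaB Fq)) * Dden Fq i := by
  rw [Dden, map_prod]
  have e1 : ∀ s : ℕ,
      PowerSeries.map ρh (PowerSeries.X
          - PowerSeries.C (R := Kbinf Fq) (thetaB Fq ^ (q Fq) ^ (s + 1)))
        = PowerSeries.X - PowerSeries.C (R := Kbinf Fq) (thetaB Fq ^ (q Fq) ^ s) := by
    intro s
    rw [map_sub, PowerSeries.map_X, PowerSeries.map_C]
    congr 2
    rw [pow_succ, pow_mul]
    exact hpow _
  calc (∏ s ∈ Finset.range (i + 1), PowerSeries.map ρh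
          (PowerSeries.X - PowerSeries.C (R := Kbinf Fq) (thetaB Fq ^ (q Fq) ^ (s + 1))))
      = ∏ s ∈ Finset.range (i + 1),
          (PowerSeries.X - PowerSeries.C (R := Kbinf Fq) (thetaB Fq ^ (q Fq) ^ s)) :=
        Finset.prod_congr rfl fun s _ => e1 s
    _ = (∏ s ∈ Finset.range i,
          (PowerSeries.X - PowerSeries.C (R := Kbinf Fq) (thetaB Fq ^ (q Fq) ^ (s + 1))))
        * (PowerSeries.X - PowerSeries.C (R := Kbinf Fq) (thetaB Fq ^ (q Fq) ^ 0)) :=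
        Finset.prod_range_succ' _ i
    _ = (PowerSeries.X - PowerSeries.C (R := Kbinf Fq) (thetaB Fq)) * Dden Fq i := by
        rw [pow_zero, pow_one, Dden, mul_comm]

theorem ofps_factor (a : PowerSeries (Kbinf Fq)) (φ : PowerSeries (Kbinf Fq))
    (h : PowerSeries.constantCoeff (R := Kbinf Fq) φ ≠ 0) (nj : ℕ) :
    HahnSeries.ofPowerSeries ℤ (Kbinf Fq) (a * (φ ^ nj)⁻¹)
      = HahnSeries.ofPowerSeries ℤ (Kbinf Fq) a
        * ((HahnSeries.ofPowerSeries ℤ (Kbinf Fq) φ) ^ nj)⁻¹ := by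
  rw [map_mul, ofps_inv Fq _ (by rw [map_pow]; exact pow_ne_zero _ h), map_pow]

theorem map_LTermPS_succ (ρh : Kbinf Fq →+* Kbinf Fq) (hpow : ∀ x, ρh (x ^ q Fq) = x)
    (m : ℕ) (nn : Fin m → ℕ) (uu : Fin m → Polynomial (Kbinf Fq)) (ii : DecTuple m) :
    PowerSeries.map ρh (LTermPS Fq m nn uu (succT ii)) =
      LTermPS Fq m nn uu ii *
        ((PowerSeries.X - PowerSeries.C (R := Kbinf Fq) (thetaB Fq)) ^ (∑ j, nn j))⁻¹ := by
  have step1 : PowerSeries.map ρh (LTermPS Fq m nn uu (succT ii)) =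
      ∏ j, ((PowerSeries.mk fun k => (uu j).coeff k ^ (q Fq) ^ (ii.1 j)) *
        (((PowerSeries.X - PowerSeries.C (R := Kbinf Fq) (thetaB Fq))
          * Dden Fq (ii.1 j)) ^ nn j)⁻¹) := by
    rw [LTermPS_eq, map_prod]
    refine Finset.prod_congr rfl fun j _ => ?_
    rw [map_mul]
    congr 1
    · rw [ps_map_mk]
      refine congrArg PowerSeries.mk (funext fun k => ?_)
      show ρh ((uu j).coeff k ^ (q Fq) ^ (ii.1 j + 1)) = (uu j).coeff k ^ (q Fq) ^ (ii.1 j)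
      rw [pow_succ, pow_mul]
      exact hpow _
    · rw [ps_map_inv Fq ρh _ (by rw [map_pow]; exact pow_ne_zero _ (Dden_cc Fq _)),
        map_pow]
      show ((PowerSeries.map ρh (Dden Fq (ii.1 j + 1))) ^ nn j)⁻¹ = _
      rw [map_Dden Fq ρh hpow]
  rw [step1, LTermPS_eq]
  apply HahnSeries.ofPowerSeries_injective (Γ := ℤ) (R := Kbinf Fq)
  rw [map_mul, map_prod, map_prod,
    ofps_inv Fq _ (by rw [map_pow]; exact pow_ne_zero _ (Z_cc Fq)), map_pow]
  have trL : ∀ j : Fin m,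
      HahnSeries.ofPowerSeries ℤ (Kbinf Fq)
        ((PowerSeries.mk fun k => (uu j).coeff k ^ (q Fq) ^ (ii.1 j)) *
          (((PowerSeries.X - PowerSeries.C (R := Kbinf Fq) (thetaB Fq))
            * Dden Fq (ii.1 j)) ^ nn j)⁻¹)
      = HahnSeries.ofPowerSeries ℤ (Kbinf Fq)
          (PowerSeries.mk fun k => (uu j).coeff k ^ (q Fq) ^ (ii.1 j)) *
        ((HahnSeries.ofPowerSeries ℤ (Kbinf Fq)
            (PowerSeries.X - PowerSeries.C (R := Kbinf Fq) (thetaB Fq))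
          * HahnSeries.ofPowerSeries ℤ (Kbinf Fq) (Dden Fq (ii.1 j))) ^ nn j)⁻¹ := by
    intro j
    rw [ofps_factor Fq _ _ (by rw [map_mul]; exact mul_ne_zero (Z_cc Fq) (Dden_cc Fq _)),
      map_mul]
  have trR : ∀ j : Fin m,
      HahnSeries.ofPowerSeries ℤ (Kbinf Fq)
        ((PowerSeries.mk fun k => (uu j).coeff k ^ (q Fq) ^ (ii.1 j)) *
          ((Dden Fq (ii.1 j)) ^ nn j)⁻¹)
      = HahnSeries.ofPowerSeries ℤ (Kbinf Fq)
          (PowerSeries.mk fun k => (uu j).coeff k ^ (q Fq) ^ (ii.1 j)) *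
        ((HahnSeries.ofPowerSeries ℤ (Kbinf Fq) (Dden Fq (ii.1 j))) ^ nn j)⁻¹ :=
    fun j => ofps_factor Fq _ _ (Dden_cc Fq _) _
  rw [Finset.prod_congr rfl fun j _ => trL j, Finset.prod_congr rfl fun j _ => trR j]
  exact field_core _ _ _ _

theorem map_LTermPS_push (ρh : Kbinf Fq →+* Kbinf Fq) (hpow : ∀ x, ρh (x ^ q Fq) = x)
    (d : ℕ) (n : Fin (d + 1) → ℕ) (u : Fin (d + 1) → Polynomial (Kbinf Fq))
    (ii' : DecTuple d) :
    PowerSeries.map ρh (LTermPS Fq (d + 1) n u (pushT ii')) =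
      (PowerSeries.mk fun k => ρh ((u (Fin.last d)).coeff k)) *
        ((PowerSeries.X - PowerSeries.C (R := Kbinf Fq) (thetaB Fq)) ^
          (∑ j : Fin d, n j.castSucc))⁻¹ *
      LTermPS Fq d (fun j => n j.castSucc) (fun j => u j.castSucc) ii' := by
  have hval : ∀ j : Fin d, (pushT ii').1 j.castSucc = ii'.1 j + 1 := by
    intro j
    show (if h : ((j.castSucc : Fin (d + 1)) : ℕ) < d then ii'.1 ⟨_, h⟩ + 1 else 0)
      = ii'.1 j + 1
    have hj : ((j.castSucc : Fin (d + 1)) : ℕ) < d := by simpa using j.isLt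
    rw [dif_pos hj]
    have hj2 : (⟨((j.castSucc : Fin (d + 1)) : ℕ), hj⟩ : Fin d) = j := Fin.ext (by simp)
    rw [hj2]
  have hlast : (pushT ii').1 (Fin.last d) = 0 := by
    show (if h : ((Fin.last d : Fin (d + 1)) : ℕ) < d then ii'.1 ⟨_, h⟩ + 1 else 0) = 0
    rw [dif_neg (by simp)]
  have step1 : PowerSeries.map ρh (LTermPS Fq (d + 1) n u (pushT ii')) =
      (∏ j : Fin d, ((PowerSeries.mk fun k => (u j.castSucc).coeff k ^ (q Fq) ^ (ii'.1 j)) *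
        (((PowerSeries.X - PowerSeries.C (R := Kbinf Fq) (thetaB Fq))
          * Dden Fq (ii'.1 j)) ^ n j.castSucc)⁻¹))
      * (PowerSeries.mk fun k => ρh ((u (Fin.last d)).coeff k)) := by
    rw [LTermPS_eq, Fin.prod_univ_castSucc, map_mul, map_prod]
    congr 1
    · refine Finset.prod_congr rfl fun j _ => ?_
      rw [hval j, map_mul]
      congr 1
      · rw [ps_map_mk]
        refine congrArg PowerSeries.mk (funext fun k => ?_)
        show ρh ((u j.castSucc).coeff k ^ (q Fq) ^ (ii'.1 j + 1))
          = (u j.castSucc).coeff k ^ (q Fq) ^ (ii'.1 j)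
        rw [pow_succ, pow_mul]
        exact hpow _
      · rw [ps_map_inv Fq ρh _ (by rw [map_pow]; exact pow_ne_zero _ (Dden_cc Fq _)),
          map_pow, map_Dden Fq ρh hpow]
    · rw [hlast]
      have hD0 : Dden Fq 0 = 1 := Finset.prod_range_zero _
      rw [hD0, one_pow, ps_inv_one, mul_one, ps_map_mk]
      refine congrArg PowerSeries.mk (funext fun k => ?_)
      show ρh ((u (Fin.last d)).coeff k ^ (q Fq) ^ 0) = ρh ((u (Fin.last d)).coeff k)
      rw [pow_zero, pow_one]
  rw [step1, LTermPS_eq]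
  apply HahnSeries.ofPowerSeries_injective (Γ := ℤ) (R := Kbinf Fq)
  rw [map_mul, map_prod, map_mul, map_mul, map_prod,
    ofps_inv Fq _ (by rw [map_pow]; exact pow_ne_zero _ (Z_cc Fq)), map_pow]
  have trL : ∀ j : Fin d,
      HahnSeries.ofPowerSeries ℤ (Kbinf Fq)
        ((PowerSeries.mk fun k => (u j.castSucc).coeff k ^ (q Fq) ^ (ii'.1 j)) *
          (((PowerSeries.X - PowerSeries.C (R := Kbinf Fq) (thetaB Fq))
            * Dden Fq (ii'.1 j)) ^ n j.castSucc)⁻¹)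
      = HahnSeries.ofPowerSeries ℤ (Kbinf Fq)
          (PowerSeries.mk fun k => (u j.castSucc).coeff k ^ (q Fq) ^ (ii'.1 j)) *
        ((HahnSeries.ofPowerSeries ℤ (Kbinf Fq)
            (PowerSeries.X - PowerSeries.C (R := Kbinf Fq) (thetaB Fq))
          * HahnSeries.ofPowerSeries ℤ (Kbinf Fq) (Dden Fq (ii'.1 j))) ^ n j.castSucc)⁻¹ := by
    intro j
    rw [ofps_factor Fq _ _ (by rw [map_mul]; exact mul_ne_zero (Z_cc Fq) (Dden_cc Fq _)),
      map_mul]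
  have trR : ∀ j : Fin d,
      HahnSeries.ofPowerSeries ℤ (Kbinf Fq)
        ((PowerSeries.mk fun k => (u j.castSucc).coeff k ^ (q Fq) ^ (ii'.1 j)) *
          ((Dden Fq (ii'.1 j)) ^ n j.castSucc)⁻¹)
      = HahnSeries.ofPowerSeries ℤ (Kbinf Fq)
          (PowerSeries.mk fun k => (u j.castSucc).coeff k ^ (q Fq) ^ (ii'.1 j)) *
        ((HahnSeries.ofPowerSeries ℤ (Kbinf Fq) (Dden Fq (ii'.1 j))) ^ n j.castSucc)⁻¹ :=
    fun j => ofps_factor Fq _ _ (Dden_cc Fq _) _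
  rw [Finset.prod_congr rfl fun j _ => trL j, Finset.prod_congr rfl fun j _ => trR j]
  rw [field_core]
  ring

end PowerSeriesLemmas

end MZV

open MZV in
/-- Let `𝕟 = (n_1, …, n_d)` be an index (here of length
`d + 1 ≥ 1`) and `𝕦 = (u_1, …, u_d) ∈ (K̄[t])^d` with
`‖u_i‖_∞ < q^{n_i q/(q−1)}`.  Then the series `L_{𝕦,𝕟}(t) ∈ K̄_∞[[t]]`
satisfies the Frobenius difference equation
`L_{𝕦,𝕟}^{(−1)} = u_d^{(−1)}/(t−θ)^{n_1+⋯+n_{d−1}} · L_{𝕦_{d1},𝕟_{d1}} + L_{𝕦,𝕟}/(t−θ)^{n_1+⋯+n_d}`,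
where `(−1)`-twisting is coefficientwise application of the inverse `ρ` of the
`q`-power Frobenius of `K̄_∞`, and `L_{∅,∅} = 1` when `d = 1`. -/
theorem statement10 (Fq : Type) [Field Fq] [Fintype Fq]
    (d : ℕ) (n : Fin (d + 1) → ℕ) (hpos : ∀ i, 1 ≤ n i)
    -- `v` is the unique extension of the `∞`-adic absolute value to `K̄_∞`
    (v : AbsoluteValue (Kbinf Fq) ℝ)
    (hv : ∀ x : Kinf Fq, v (algebraMap (Kinf Fq) (Kbinf Fq) x) = absK Fq x)
    -- `ρ` is the inverse of the `q`-power Frobenius of `K̄_∞`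
    (ρ : Kbinf Fq → Kbinf Fq) (hρ : ∀ x, ρ x ^ q Fq = x)
    -- the polynomials `u_i ∈ K̄[t]` with `‖u_i‖_∞ < q^{n_i q/(q−1)}`
    (u : Fin (d + 1) → Polynomial (Kbinf Fq))
    (hucoeff : ∀ (i : Fin (d + 1)) (k : ℕ), (u i).coeff k ∈ Kbar Fq)
    (hubd : ∀ (i : Fin (d + 1)) (k : ℕ), v ((u i).coeff k) <
      (q Fq : ℝ) ^ (((n i : ℝ) * (q Fq : ℝ)) / ((q Fq : ℝ) - 1)))
    -- `L = L_{𝕦,𝕟}(t)`, the coefficientwise (unconditionally) convergent sum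
    (L : PowerSeries (Kbinf Fq))
    (hL : ∀ k : ℕ, HasSumAbs v
      (fun ii : DecTuple (d + 1) =>
        PowerSeries.coeff (R := Kbinf Fq) k (LTermPS Fq (d + 1) n u ii))
      (PowerSeries.coeff (R := Kbinf Fq) k L))
    -- `L' = L_{𝕦_{d1},𝕟_{d1}}(t) = L_{(u_1,…,u_{d−1}),(n_1,…,n_{d−1})}(t)`
    -- (equal to `1` when `d = 1`)
    (L' : PowerSeries (Kbinf Fq))
    (hL' : ∀ k : ℕ, HasSumAbs v
      (fun ii : DecTuple d =>
        PowerSeries.coeff (R := Kbinf Fq) k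
          (LTermPS Fq d (fun j => n j.castSucc) (fun j => u j.castSucc) ii))
      (PowerSeries.coeff (R := Kbinf Fq) k L')) :
    (PowerSeries.mk fun k => ρ (PowerSeries.coeff (R := Kbinf Fq) k L)) =
      (PowerSeries.mk fun k => ρ ((u (Fin.last d)).coeff k)) *
        ((PowerSeries.X - PowerSeries.C (R := Kbinf Fq) (thetaB Fq)) ^
          (∑ j : Fin d, n j.castSucc))⁻¹ * L' +
      L * ((PowerSeries.X - PowerSeries.C (R := Kbinf Fq) (thetaB Fq)) ^ (∑ j, n j))⁻¹ := by
  classical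
  obtain ⟨ρh, hρeq, hpow⟩ := rho_hom_spec Fq ρ hρ
  have hρfun : ρ = ⇑ρh := funext fun x => (hρeq x).symm
  have hρ' : ∀ x, ρh x ^ q Fq = x := fun x => by rw [hρeq]; exact hρ x
  subst hρfun
  apply PowerSeries.ext
  intro k
  rw [PowerSeries.coeff_mk, map_add]
  -- abbreviations
  set Z : PowerSeries (Kbinf Fq) :=
    PowerSeries.X - PowerSeries.C (R := Kbinf Fq) (thetaB Fq) with hZ
  set A : PowerSeries (Kbinf Fq) :=
    (PowerSeries.mk fun k => ρh ((u (Fin.last d)).coeff k)) *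
      (Z ^ (∑ j : Fin d, n j.castSucc))⁻¹ with hA
  set B : PowerSeries (Kbinf Fq) := (Z ^ (∑ j, n j))⁻¹ with hB
  -- the two convergent-sum descriptions of the twisted coefficient
  have h1 : HasSumAbs v
      (fun ii : DecTuple (d + 1) =>
        ρh (PowerSeries.coeff (R := Kbinf Fq) k (LTermPS Fq (d + 1) n u ii)))
      (ρh (PowerSeries.coeff (R := Kbinf Fq) k L)) :=
    hasSumAbs_rho Fq v ρh hρ' (hL k)
  -- left piece
  have hGL : HasSumAbs v
      (fun ii' : DecTuple d =>
        ρh (PowerSeries.coeff (R := Kbinf Fq) k (LTermPS Fq (d + 1) n u (pushT ii'))))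
      (PowerSeries.coeff (R := Kbinf Fq) k (A * L')) := by
    have hterm : ∀ ii' : DecTuple d,
        ρh (PowerSeries.coeff (R := Kbinf Fq) k (LTermPS Fq (d + 1) n u (pushT ii')))
        = ∑ p ∈ Finset.HasAntidiagonal.antidiagonal k,
            (PowerSeries.coeff (R := Kbinf Fq) p.1 A) *
              (PowerSeries.coeff (R := Kbinf Fq) p.2
                (LTermPS Fq d (fun j => n j.castSucc) (fun j => u j.castSucc) ii')) := by
      intro ii'
      rw [← PowerSeries.coeff_map, map_LTermPS_push Fq ρh hpow d n u ii',
        ← hZ, ← hA, PowerSeries.coeff_mul]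
    have hsum : HasSumAbs v
        (fun ii' : DecTuple d => ∑ p ∈ Finset.HasAntidiagonal.antidiagonal k,
          (PowerSeries.coeff (R := Kbinf Fq) p.1 A) *
            (PowerSeries.coeff (R := Kbinf Fq) p.2
              (LTermPS Fq d (fun j => n j.castSucc) (fun j => u j.castSucc) ii')))
        (∑ p ∈ Finset.HasAntidiagonal.antidiagonal k,
          (PowerSeries.coeff (R := Kbinf Fq) p.1 A) * (PowerSeries.coeff (R := Kbinf Fq) p.2 L')) :=
      hasSumAbs_finsetSum _ _ _
        (fun p _ => (hL' p.2).const_mul (PowerSeries.coeff (R := Kbinf Fq) p.1 A))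
    rw [funext hterm, PowerSeries.coeff_mul]
    exact hsum
  -- right piece
  have hGR : HasSumAbs v
      (fun ii : DecTuple (d + 1) =>
        ρh (PowerSeries.coeff (R := Kbinf Fq) k (LTermPS Fq (d + 1) n u (succT ii))))
      (PowerSeries.coeff (R := Kbinf Fq) k (L * B)) := by
    have hterm : ∀ ii : DecTuple (d + 1),
        ρh (PowerSeries.coeff (R := Kbinf Fq) k (LTermPS Fq (d + 1) n u (succT ii)))
        = ∑ p ∈ Finset.HasAntidiagonal.antidiagonal k,
            (PowerSeries.coeff (R := Kbinf Fq) p.2 B) *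
              (PowerSeries.coeff (R := Kbinf Fq) p.1 (LTermPS Fq (d + 1) n u ii)) := by
      intro ii
      rw [← PowerSeries.coeff_map, map_LTermPS_succ Fq ρh hpow (d + 1) n u ii,
        ← hZ, ← hB, PowerSeries.coeff_mul]
      exact Finset.sum_congr rfl fun p _ => mul_comm _ _
    have hsum : HasSumAbs v
        (fun ii : DecTuple (d + 1) => ∑ p ∈ Finset.HasAntidiagonal.antidiagonal k,
          (PowerSeries.coeff (R := Kbinf Fq) p.2 B) *
            (PowerSeries.coeff (R := Kbinf Fq) p.1 (LTermPS Fq (d + 1) n u ii)))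
        (∑ p ∈ Finset.HasAntidiagonal.antidiagonal k,
          (PowerSeries.coeff (R := Kbinf Fq) p.2 B) * (PowerSeries.coeff (R := Kbinf Fq) p.1 L)) :=
      hasSumAbs_finsetSum _ _ _
        (fun p _ => (hL p.1).const_mul (PowerSeries.coeff (R := Kbinf Fq) p.2 B))
    rw [funext hterm]
    have hLB : (∑ p ∈ Finset.HasAntidiagonal.antidiagonal k,
        (PowerSeries.coeff (R := Kbinf Fq) p.2 B) * (PowerSeries.coeff (R := Kbinf Fq) p.1 L))
        = PowerSeries.coeff (R := Kbinf Fq) k (L * B) := by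
      rw [PowerSeries.coeff_mul]
      exact Finset.sum_congr rfl fun p _ => mul_comm _ _
    rw [← hLB]
    exact hsum
  -- combine via the splitting bijection
  have hg : HasSumAbs v
      (Sum.elim
        (fun ii' : DecTuple d =>
          ρh (PowerSeries.coeff (R := Kbinf Fq) k (LTermPS Fq (d + 1) n u (pushT ii'))))
        (fun ii : DecTuple (d + 1) =>
          ρh (PowerSeries.coeff (R := Kbinf Fq) k (LTermPS Fq (d + 1) n u (succT ii)))))
      (PowerSeries.coeff (R := Kbinf Fq) k (A * L') + PowerSeries.coeff (R := Kbinf Fq) k (L * B)) :=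
    hasSumAbs_sumElim hGL hGR
  have h2 := hasSumAbs_equiv (splitEquiv d).symm hg
  have hfun : (fun i : DecTuple (d + 1) =>
      Sum.elim
        (fun ii' : DecTuple d =>
          ρh (PowerSeries.coeff (R := Kbinf Fq) k (LTermPS Fq (d + 1) n u (pushT ii'))))
        (fun ii : DecTuple (d + 1) =>
          ρh (PowerSeries.coeff (R := Kbinf Fq) k (LTermPS Fq (d + 1) n u (succT ii))))
        ((splitEquiv d).symm i))
      = fun ii : DecTuple (d + 1) =>
          ρh (PowerSeries.coeff (R := Kbinf Fq) k (LTermPS Fq (d + 1) n u ii)) := by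
    funext i
    have helim : ∀ x : DecTuple d ⊕ DecTuple (d + 1),
        Sum.elim
          (fun ii' : DecTuple d =>
            ρh (PowerSeries.coeff (R := Kbinf Fq) k (LTermPS Fq (d + 1) n u (pushT ii'))))
          (fun ii : DecTuple (d + 1) =>
            ρh (PowerSeries.coeff (R := Kbinf Fq) k (LTermPS Fq (d + 1) n u (succT ii)))) x
        = ρh (PowerSeries.coeff (R := Kbinf Fq) k (LTermPS Fq (d + 1) n u (splitEquiv d x))) := by
      rintro (a | b) <;> rfl
    rw [helim, Equiv.apply_symm_apply]
  rw [hfun] at h2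
  exact HasSumAbs.unique h1 h2
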